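/- For integers k, r, k', r' ≥ 1, the presented monoids ⟨d, b ∣ d² = 1, b² = b, (d·b)^k = (d·b)^(k+r)⟩ and ⟨d, b ∣ d² = 1, b² = b, (d·b)^{k'} = (d·b)^{k'+r'}⟩ are isomorphic as monoids if and only if k = k' and r = r'. -/

import Mathlib

/-- The free monoid on the two generators `d` (the involution) and `b` (the idempotent). -/
abbrev F2 : Type := FreeMonoid Bool

/-- The generator `d`. -/
def dF : F2 := FreeMonoid.of true

/-- The generator `b`. -/
def bF : F2 := FreeMonoid.of false

/-- The congruence on the free monoid generated by `d·d ~ 1`, `b·b ~ b`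
and the extra relations in `R`. -/
def presCon (R : Set (F2 × F2)) : Con F2 :=
  conGen (fun x y => (x, y) ∈ insert (dF * dF, (1 : F2)) (insert (bF * bF, bF) R))

/-- The monoid presented by `⟨d, b ∣ d² = 1, b² = b, R⟩`. -/
abbrev PresMon (R : Set (F2 × F2)) : Type := (presCon R).Quotient

namespace Stmt18

def Rset (k r : ℕ) : Set (F2 × F2) := {((dF * bF) ^ k, (dF * bF) ^ (k + r))}

abbrev M (k r : ℕ) : Type := PresMon (Rset k r)

def pi (k r : ℕ) : F2 →* M k r := (presCon (Rset k r)).mk'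

def D (k r : ℕ) : M k r := pi k r dF
def B (k r : ℕ) : M k r := pi k r bF
def C (k r : ℕ) : M k r := D k r * B k r

variable {k r : ℕ}

lemma rel_of {x y : F2} (h : (x,y) ∈ insert (dF * dF, (1 : F2)) (insert (bF * bF, bF) (Rset k r))) :
    pi k r x = pi k r y := by
  have : presCon (Rset k r) x y := ConGen.Rel.of x y h
  exact (Con.eq _).mpr this

lemma hD : D k r * D k r = 1 := by
  have := rel_of (k := k) (r := r) (x := dF * dF) (y := 1) (by simp)
  simpa [D, map_mul] using this

lemma hB : B k r * B k r = B k r := by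
  have := rel_of (k := k) (r := r) (x := bF * bF) (y := bF) (by simp)
  simpa [B, map_mul] using this

lemma hC : C k r ^ k = C k r ^ (k + r) := by
  have := rel_of (k := k) (r := r) (x := (dF * bF)^k) (y := (dF * bF)^(k+r))
    (by simp [Rset])
  simpa [C, D, B, map_mul, map_pow] using this

/-- `C^(k+j+r) = C^(k+j)`. -/
lemma Lr (j : ℕ) : C k r ^ (k + j + r) = C k r ^ (k + j) := by
  have h1 : C k r ^ (k + j + r) = C k r ^ j * C k r ^ (k + r) := by
    rw [← pow_add]; ring_nf
  rw [h1, ← hC, ← pow_add]; ring_nf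

/-- `C^(k+j+t*r) = C^(k+j)`. -/
lemma L1 (j t : ℕ) : C k r ^ (k + j + t * r) = C k r ^ (k + j) := by
  induction t with
  | zero => simp
  | succ t ih =>
      calc C k r ^ (k + j + (t+1) * r) = C k r ^ (k + (j + t*r) + r) := by ring_nf
        _ = C k r ^ (k + (j + t*r)) := Lr _
        _ = C k r ^ (k + j + t * r) := by ring_nf
        _ = C k r ^ (k + j) := ih

lemma L1' {a : ℕ} (ha : k ≤ a) (t : ℕ) : C k r ^ (a + t * r) = C k r ^ a := by
  obtain ⟨j, rfl⟩ := Nat.exists_eq_add_of_le ha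
  exact L1 j t

/-- `C^m * B = C^m` for `m ≥ 1`. -/
lemma CB {m : ℕ} (hm : 1 ≤ m) : C k r ^ m * B k r = C k r ^ m := by
  obtain ⟨j, rfl⟩ := Nat.exists_eq_add_of_le hm
  rw [add_comm, pow_add, pow_one, mul_assoc]
  have h1 : C k r * B k r = C k r := by
    rw [C, mul_assoc, hB]
  rw [h1]


lemma m2 {m : ℕ} : (C k r ^ m * D k r) * D k r = C k r ^ m := by
  rw [mul_assoc, hD, mul_one]

lemma m4 {m : ℕ} : (B k r * C k r ^ m * D k r) * D k r = B k r * C k r ^ m := by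
  rw [mul_assoc, hD, mul_one]

lemma m7 {m : ℕ} : (C k r ^ m * D k r) * B k r = C k r ^ (m+1) := by
  rw [mul_assoc, pow_succ, C]

lemma m8 {m : ℕ} : (B k r * C k r ^ m) * B k r = B k r * C k r ^ m := by
  rcases Nat.eq_zero_or_pos m with hm | hm
  · subst hm; simp [hB]
  · rw [mul_assoc, CB hm]

lemma m9 {m : ℕ} : (B k r * C k r ^ m * D k r) * B k r = B k r * C k r ^ (m+1) := by
  rw [mul_assoc, mul_assoc, ← C, ← pow_succ]

def IsShape (k r : ℕ) (x : M k r) : Prop :=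
  ∃ m, x = C k r ^ m ∨ x = C k r ^ m * D k r ∨ x = B k r * C k r ^ m ∨
      x = B k r * C k r ^ m * D k r

/-- Shape lemma: every element has one of four normal-ish forms. -/
lemma shape (x : M k r) : IsShape k r x := by
  obtain ⟨w, rfl⟩ := Con.mk'_surjective (c := presCon (Rset k r)) (b := x)
  have key : ∀ l : List Bool, IsShape k r (pi k r (FreeMonoid.ofList l)) := by
    intro l
    induction l using List.reverseRecOn with
    | nil => exact ⟨0, Or.inl (by simp)⟩
    | append_singleton l c ih =>
      have hsplit : pi k r (FreeMonoid.ofList (l ++ [c])) =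
          pi k r (FreeMonoid.ofList l) * pi k r (FreeMonoid.of c) := by
        rw [← map_mul]; rfl
      cases c with
      | true =>
        have hg : pi k r (FreeMonoid.of true) = D k r := rfl
        rcases ih with ⟨m, h | h | h | h⟩ <;> rw [hsplit, hg, h]
        · exact ⟨m, Or.inr (Or.inl rfl)⟩
        · exact ⟨m, Or.inl m2⟩
        · exact ⟨m, Or.inr (Or.inr (Or.inr rfl))⟩
        · exact ⟨m, Or.inr (Or.inr (Or.inl m4))⟩
      | false =>
        have hg : pi k r (FreeMonoid.of false) = B k r := rfl
        rcases ih with ⟨m, h | h | h | h⟩ <;> rw [hsplit, hg, h]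
        · rcases Nat.eq_zero_or_pos m with hm | hm
          · subst hm; exact ⟨0, Or.inr (Or.inr (Or.inl (by simp)))⟩
          · exact ⟨m, Or.inl (CB hm)⟩
        · exact ⟨m+1, Or.inl m7⟩
        · exact ⟨m, Or.inr (Or.inr (Or.inl m8))⟩
        · exact ⟨m+1, Or.inr (Or.inr (Or.inl m9))⟩
  have := key w.toList
  rwa [FreeMonoid.ofList_toList] at this

def E (k r : ℕ) : M k r := C k r * D k r

lemma hDC : D k r * C k r = B k r := by
  rw [C, ← mul_assoc, hD, one_mul]

lemma hCB1 : C k r * B k r = C k r := by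
  have := CB (k := k) (r := r) (m := 1) le_rfl
  simpa using this

lemma hEE : E k r * E k r = E k r := by
  rw [E, mul_assoc, ← mul_assoc (D k r), hDC, ← mul_assoc, hCB1]

lemma hEC : E k r * C k r = C k r := by
  rw [E, mul_assoc, hDC, hCB1]

lemma hDx (z : M k r) : D k r * (D k r * z) = z := by
  rw [← mul_assoc, hD, one_mul]

lemma hECm {m : ℕ} (hm : 1 ≤ m) : E k r * C k r ^ m = C k r ^ m := by
  obtain ⟨j, rfl⟩ : ∃ j, m = j + 1 := ⟨m - 1, by omega⟩
  clear hm
  induction j with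
  | zero => simpa using hEC
  | succ j ih => rw [pow_succ, ← mul_assoc, ih, ← pow_succ]

lemma P2 (j : ℕ) {N : ℕ} (hN : 1 ≤ N) :
    (C k r ^ (j+1) * D k r) ^ N = C k r ^ (j*N) * E k r := by
  have h2 : C k r ^ (j+1) * D k r = C k r ^ j * E k r := by
    rw [pow_succ, mul_assoc, ← E]
  obtain ⟨N', rfl⟩ : ∃ N', N = N' + 1 := ⟨N - 1, by omega⟩
  clear hN
  induction N' with
  | zero => rw [pow_one, h2]; norm_num
  | succ N' ih =>
      rw [pow_succ, ih, h2]
      rcases Nat.eq_zero_or_pos j with hj | hj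
      · subst hj
        simp only [pow_zero, one_mul, zero_mul]
        exact hEE
      · rw [mul_assoc, ← mul_assoc (E k r), hECm hj, ← mul_assoc, ← pow_add]
        congr 2

lemma Bpow {N : ℕ} (hN : 1 ≤ N) : B k r ^ N = B k r := by
  obtain ⟨N', rfl⟩ : ∃ N', N = N' + 1 := ⟨N - 1, by omega⟩
  clear hN
  induction N' with
  | zero => simp
  | succ N' ih => rw [pow_succ, ih, hB]

lemma P3 {m : ℕ} (hm : 1 ≤ m) {N : ℕ} (hN : 1 ≤ N) :
    (B k r * C k r ^ m) ^ N = B k r * C k r ^ (m*N) := by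
  obtain ⟨N', rfl⟩ : ∃ N', N = N' + 1 := ⟨N - 1, by omega⟩
  clear hN
  induction N' with
  | zero => simp
  | succ N' ih =>
      rw [pow_succ, ih, mul_assoc, ← mul_assoc (C k r ^ (m * (N'+1))),
        CB (le_trans hm (Nat.le_mul_of_pos_right m (by omega))), ← pow_add]
      congr 2

lemma hDCm {m : ℕ} : D k r * C k r ^ (m+1) = B k r * C k r ^ m := by
  rw [pow_succ', ← mul_assoc, hDC]

lemma P4eq {m : ℕ} : B k r * C k r ^ m * D k r = D k r * C k r ^ (m+1) * D k r := by
  rw [hDCm]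

lemma P4 (y : M k r) (N : ℕ) :
    (D k r * y * D k r) ^ N = if N = 0 then 1 else D k r * y ^ N * D k r := by
  induction N with
  | zero => simp
  | succ N ih =>
      rcases Nat.eq_zero_or_pos N with hN | hN
      · subst hN; simp
      · rw [pow_succ, ih, if_neg (by omega), if_neg (by omega)]
        simp only [mul_assoc]
        rw [hDx]
        simp only [← mul_assoc]
        rw [mul_assoc (D k r), ← pow_succ]

lemma Dpow2 (a t : ℕ) : D k r ^ (a + 2*t) = D k r ^ a := by
  rw [pow_add, pow_mul, pow_two, hD, one_pow, mul_one]

/-- The universal identity: every element satisfies `x^k = x^(k+2r)`. -/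
lemma idM (hk : 1 ≤ k) (x : M k r) : x ^ k = x ^ (k + 2*r) := by
  obtain ⟨m, h | h | h | h⟩ := shape x
  · subst h
    rcases Nat.eq_zero_or_pos m with hm | hm
    · subst hm; simp
    · rw [← pow_mul, ← pow_mul,
        show m * (k + 2*r) = m*k + (2*m)*r from by ring,
        L1' (Nat.le_mul_of_pos_left k hm)]
  · subst h
    rcases Nat.eq_zero_or_pos m with hm | hm
    · subst hm
      simp only [pow_zero, one_mul]
      rw [show k + 2*r = k + 2*r from rfl, Dpow2 k r]
    · obtain ⟨j, rfl⟩ := Nat.exists_eq_add_of_le hm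
      rw [add_comm 1 j, P2 j hk, P2 j (by omega)]
      rcases Nat.eq_zero_or_pos j with hj | hj
      · subst hj; simp
      · rw [show j * (k + 2*r) = j*k + (2*j)*r from by ring,
          L1' (Nat.le_mul_of_pos_left k hj)]
  · subst h
    rcases Nat.eq_zero_or_pos m with hm | hm
    · subst hm
      simp only [pow_zero, mul_one]
      rw [Bpow hk, Bpow (by omega)]
    · rw [P3 hm hk, P3 hm (by omega),
        show m * (k + 2*r) = m*k + (2*m)*r from by ring,
        L1' (Nat.le_mul_of_pos_left k hm)]
  · subst h
    rw [P4eq, P4, P4, if_neg (by omega), if_neg (by omega), ← pow_mul, ← pow_mul,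
      show (m+1) * (k + 2*r) = (m+1)*k + (2*(m+1))*r from by ring,
      L1' (Nat.le_mul_of_pos_left k (by omega))]

/-! ### The transformation model -/

/-- tail-cycle map on `ℕ`: tail `0,…,k-1`, cycle `k,…,k+r-1`. -/
def rho (k r : ℕ) : ℕ → ℕ := fun i => if i < k + r - 1 then i + 1 else k

def del (k r : ℕ) : Function.End (ℕ × Bool) :=
  fun p => if 1 ≤ p.1 ∧ p.1 < k + r then (p.1, !p.2) else p

def bet (k r : ℕ) : Function.End (ℕ × Bool) :=
  fun p => if p.2 then p else (rho k r p.1, true)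

section Model
variable (hk : 1 ≤ k) (hr : 1 ≤ r)

lemma rho_pos {i : ℕ} (hk : 1 ≤ k) : 1 ≤ rho k r i := by
  unfold rho; split <;> omega

lemma rho_lt {i : ℕ} (hr : 1 ≤ r) : rho k r i < k + r := by
  unfold rho; split <;> omega

/-- membership in the cycle. -/
def Cyc (k r j : ℕ) : Prop := k ≤ j ∧ j < k + r

lemma rho_cyc {j : ℕ} (h : Cyc k r j) : Cyc k r (rho k r j) := by
  obtain ⟨h1, h2⟩ := h
  unfold rho; constructor <;> split <;> omega

lemma rho_cyc_iterate {j : ℕ} (h : Cyc k r j) (a : ℕ) : Cyc k r ((rho k r)^[a] j) := by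
  induction a with
  | zero => simpa
  | succ a ih => rw [Function.iterate_succ_apply']; exact rho_cyc ih

lemma rho_formula (hr : 1 ≤ r) : ∀ (a t : ℕ), t < r → (rho k r)^[a] (k + t) = k + (t + a) % r := by
  intro a
  induction a with
  | zero => intro t ht; simp [Nat.mod_eq_of_lt ht]
  | succ a ih =>
      intro t ht
      rw [Function.iterate_succ_apply]
      rcases Nat.lt_or_ge t (r - 1) with h | h
      · have : rho k r (k + t) = k + (t + 1) := by unfold rho; split <;> omega
        rw [this, ih (t+1) (by omega)]
        have he : t + 1 + a = t + (a + 1) := by omega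
        rw [he]
      · have ht' : t = r - 1 := by omega
        have : rho k r (k + t) = k + 0 := by unfold rho; split <;> omega
        rw [this, ih 0 (by omega)]
        congr 1
        have h1 : t + (a + 1) = r + a := by omega
        rw [h1, Nat.add_mod_left, Nat.zero_add]
  
lemma rho_cycr {j : ℕ} (hr : 1 ≤ r) (h : Cyc k r j) : (rho k r)^[r] j = j := by
  obtain ⟨h1, h2⟩ := h
  obtain ⟨t, rfl⟩ := Nat.exists_eq_add_of_le h1
  rw [rho_formula hr r t (by omega), Nat.add_mod_right, Nat.mod_eq_of_lt (by omega)]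

lemma rho_tail : ∀ (a i : ℕ), i + a < k + r → (rho k r)^[a] i = i + a := by
  intro a
  induction a with
  | zero => simp
  | succ a ih =>
      intro i hi
      rw [Function.iterate_succ_apply]
      have h0 : rho k r i = i + 1 := by unfold rho; split <;> omega
      rw [h0, ih (i+1) (by omega)]
      omega

lemma rho_entry (hr : 1 ≤ r) : ∀ (a i : ℕ), i < k + r → k ≤ i + a → Cyc k r ((rho k r)^[a] i) := by
  intro a
  induction a with
  | zero =>
      intro i h1 h2
      rw [Function.iterate_zero_apply]
      exact ⟨by omega, h1⟩
  | succ a ih =>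
      intro i h1 h2
      rw [Function.iterate_succ_apply]
      rcases Nat.lt_or_ge i (k + r - 1) with h | h
      · have : rho k r i = i + 1 := by unfold rho; split <;> omega
        rw [this]; exact ih (i+1) (by omega) (by omega)
      · have : rho k r i = k := by unfold rho; split <;> omega
        rw [this]; exact ih k (by omega) (by omega)

/-- MAIN: `ρ^[a+r] = ρ^[a]` for `a ≥ k`. -/
lemma rho_main (hk : 1 ≤ k) (hr : 1 ≤ r) {a : ℕ} (ha : k ≤ a) (i : ℕ) :
    (rho k r)^[a + r] i = (rho k r)^[a] i := by
  have key : ∀ (b j : ℕ), j < k + r → k ≤ j + b → (rho k r)^[b + r] j = (rho k r)^[b] j := by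
    intro b j h1 h2
    have hc := rho_entry hr b j h1 h2
    rw [add_comm b r, Function.iterate_add_apply]
    exact rho_cycr hr hc
  rcases Nat.lt_or_ge i (k + r) with h | h
  · exact key a i h (by omega)
  · obtain ⟨a', rfl⟩ : ∃ a', a = a' + 1 := ⟨a - 1, by omega⟩
    have h1 : rho k r i = k := by unfold rho; split <;> omega
    rw [show a' + 1 + r = (a' + r) + 1 from by ring, Function.iterate_succ_apply,
      Function.iterate_succ_apply, h1]
    exact key a' k (by omega) (by omega)

/-- `ρ^[a+r] = ρ^[a]` already for `a ≥ k-1` on points `1 ≤ i < k+r`. -/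
lemma rho_main' (hk : 1 ≤ k) (hr : 1 ≤ r) {a i : ℕ} (ha : k - 1 ≤ a) (h1 : 1 ≤ i)
    (h2 : i < k + r) : (rho k r)^[a + r] i = (rho k r)^[a] i := by
  have hc := rho_entry hr a i h2 (by omega)
  rw [add_comm a r, Function.iterate_add_apply]
  exact rho_cycr hr hc

/-! evaluation lemmas for the model maps -/

lemma del_del : del k r * del k r = 1 := by
  funext p
  show del k r (del k r p) = p
  unfold del
  rcases p with ⟨i, x⟩
  by_cases h : 1 ≤ i ∧ i < k + r <;> simp [h]

lemma bet_bet : bet k r * bet k r = bet k r := by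
  funext p
  show bet k r (bet k r p) = bet k r p
  unfold bet
  rcases p with ⟨i, x⟩
  cases x <;> simp

/-- the function `f = δ∘β`. -/
def ff (k r : ℕ) : Function.End (ℕ × Bool) := del k r * bet k r
/-- the function `g = β∘δ`. -/
def gg (k r : ℕ) : Function.End (ℕ × Bool) := bet k r * del k r

lemma ff_false (hk : 1 ≤ k) (hr : 1 ≤ r) (i : ℕ) :
    ff k r (i, false) = (rho k r i, false) := by
  show del k r (bet k r (i, false)) = _
  unfold del bet
  simp [rho_pos hk, rho_lt hr]

lemma ff_true_in (h1 : 1 ≤ i) (h2 : i < k + r) : ff k r (i, true) = (i, false) := by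
  show del k r (bet k r (i, true)) = _
  unfold del bet
  simp [h1, h2]

lemma ff_true_out (h : ¬ (1 ≤ i ∧ i < k + r)) : ff k r (i, true) = (i, true) := by
  show del k r (bet k r (i, true)) = _
  unfold del bet
  simp [h]

lemma end_pow_succ (f : Function.End (ℕ × Bool)) (m : ℕ) (x : ℕ × Bool) :
    (f ^ (m+1)) x = (f ^ m) (f x) := by
  rw [pow_succ]; rfl

lemma ffpow_false (hk : 1 ≤ k) (hr : 1 ≤ r) (m i : ℕ) :
    (ff k r ^ m) (i, false) = ((rho k r)^[m] i, false) := by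
  induction m generalizing i with
  | zero => rfl
  | succ m ih =>
      rw [end_pow_succ, ff_false hk hr, ih, Function.iterate_succ_apply]

lemma ffpow_true_out (h : ¬ (1 ≤ i ∧ i < k + r)) (m : ℕ) :
    (ff k r ^ m) (i, true) = (i, true) := by
  induction m with
  | zero => rfl
  | succ m ih => rw [end_pow_succ, ff_true_out h, ih]

lemma gg_true_in (hk : 1 ≤ k) (hr : 1 ≤ r) (h1 : 1 ≤ i) (h2 : i < k + r) :
    gg k r (i, true) = (rho k r i, true) := by
  show bet k r (del k r (i, true)) = _
  unfold del bet
  simp [h1, h2]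

lemma gg_true_out (h : ¬ (1 ≤ i ∧ i < k + r)) : gg k r (i, true) = (i, true) := by
  show bet k r (del k r (i, true)) = _
  unfold del bet
  simp [h]

lemma gg_false_in (h1 : 1 ≤ i) (h2 : i < k + r) : gg k r (i, false) = (i, true) := by
  show bet k r (del k r (i, false)) = _
  unfold del bet
  simp [h1, h2]

lemma gg_false_out (h : ¬ (1 ≤ i ∧ i < k + r)) : gg k r (i, false) = (rho k r i, true) := by
  show bet k r (del k r (i, false)) = _
  unfold del bet
  simp [h]

lemma ggpow_true_in (hk : 1 ≤ k) (hr : 1 ≤ r) (m : ℕ) :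
    ∀ i, 1 ≤ i → i < k + r → (gg k r ^ m) (i, true) = ((rho k r)^[m] i, true) := by
  induction m with
  | zero => intro i _ _; rfl
  | succ m ih =>
      intro i h1 h2
      rw [end_pow_succ, gg_true_in hk hr h1 h2, Function.iterate_succ_apply]
      exact ih _ (rho_pos hk) (rho_lt hr)

lemma rel_ff (hk : 1 ≤ k) (hr : 1 ≤ r) : ff k r ^ k = ff k r ^ (k + r) := by
  funext p
  rcases p with ⟨i, x⟩
  cases x
  · rw [ffpow_false hk hr, ffpow_false hk hr, rho_main hk hr le_rfl i]
  · by_cases h : 1 ≤ i ∧ i < k + r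
    · obtain ⟨k', rfl⟩ : ∃ k', k = k' + 1 := ⟨k - 1, by omega⟩
      rw [show k' + 1 + r = (k' + r) + 1 from by ring, end_pow_succ, end_pow_succ,
        ff_true_in h.1 h.2, ffpow_false hk hr, ffpow_false hk hr,
        rho_main' hk hr (by omega) h.1 h.2]
    · rw [ffpow_true_out h, ffpow_true_out h]

lemma ggpow_true_out (h : ¬ (1 ≤ i ∧ i < k + r)) (m : ℕ) :
    (gg k r ^ m) (i, true) = (i, true) := by
  induction m with
  | zero => rfl
  | succ m ih => rw [end_pow_succ, gg_true_out h, ih]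

lemma rel_gg (hk : 1 ≤ k) (hr : 1 ≤ r) : gg k r ^ k = gg k r ^ (k + r) := by
  funext p
  rcases p with ⟨i, x⟩
  cases x
  · -- (i, false)
    by_cases h : 1 ≤ i ∧ i < k + r
    · obtain ⟨k', rfl⟩ : ∃ k', k = k' + 1 := ⟨k - 1, by omega⟩
      rw [show k' + 1 + r = (k' + r) + 1 from by ring, end_pow_succ, end_pow_succ,
        gg_false_in h.1 h.2, ggpow_true_in hk hr _ _ h.1 h.2,
        ggpow_true_in hk hr _ _ h.1 h.2, rho_main' hk hr (by omega) h.1 h.2]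
    · obtain ⟨k', rfl⟩ : ∃ k', k = k' + 1 := ⟨k - 1, by omega⟩
      rw [show k' + 1 + r = (k' + r) + 1 from by ring, end_pow_succ, end_pow_succ,
        gg_false_out h, ggpow_true_in hk hr _ _ (rho_pos hk) (rho_lt hr),
        ggpow_true_in hk hr _ _ (rho_pos hk) (rho_lt hr),
        rho_main' hk hr (by omega) (rho_pos hk) (rho_lt hr)]
  · by_cases h : 1 ≤ i ∧ i < k + r
    · rw [ggpow_true_in hk hr _ _ h.1 h.2, ggpow_true_in hk hr _ _ h.1 h.2,
        rho_main hk hr le_rfl i]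
    · rw [ggpow_true_out h, ggpow_true_out h]

/-! ### The homomorphisms -/

def phiF (k r : ℕ) : F2 →* Function.End (ℕ × Bool) :=
  FreeMonoid.lift (fun c => if c then del k r else bet k r)

lemma phiF_dF : phiF k r dF = del k r := by
  rw [dF, phiF, FreeMonoid.lift_eval_of]; rfl

lemma phiF_bF : phiF k r bF = bet k r := by
  rw [bF, phiF, FreeMonoid.lift_eval_of]; rfl

lemma phiF_rel (hk : 1 ≤ k) (hr : 1 ≤ r) : presCon (Rset k r) ≤ Con.ker (phiF k r) := by
  apply Con.conGen_le.mpr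
  rintro x y h
  rcases h with h | h | h
  · obtain ⟨h1, h2⟩ := Prod.mk.injEq .. ▸ h
    rw [Con.ker_rel, h1, h2, map_mul, phiF_dF, map_one, del_del]
  · obtain ⟨h1, h2⟩ := Prod.mk.injEq .. ▸ h
    rw [Con.ker_rel, h1, h2, map_mul, phiF_bF, bet_bet]
  · rw [Rset, Set.mem_singleton_iff] at h
    obtain ⟨h1, h2⟩ := Prod.mk.injEq .. ▸ h
    rw [Con.ker_rel, h1, h2, map_pow, map_pow, map_mul, phiF_dF, phiF_bF, ← ff]
    exact rel_ff hk hr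

def phi (hk : 1 ≤ k) (hr : 1 ≤ r) : M k r →* Function.End (ℕ × Bool) :=
  Con.lift _ (phiF k r) (phiF_rel hk hr)

lemma phi_pi (hk : 1 ≤ k) (hr : 1 ≤ r) (w : F2) :
    phi hk hr (pi k r w) = phiF k r w := Con.lift_mk' _ _

lemma phi_D (hk : 1 ≤ k) (hr : 1 ≤ r) : phi hk hr (D k r) = del k r := by
  rw [D, phi_pi, phiF_dF]

lemma phi_B (hk : 1 ≤ k) (hr : 1 ≤ r) : phi hk hr (B k r) = bet k r := by
  rw [B, phi_pi, phiF_bF]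

lemma phi_C (hk : 1 ≤ k) (hr : 1 ≤ r) : phi hk hr (C k r) = ff k r := by
  rw [C, map_mul, phi_D, phi_B, ff]

open MulOpposite in
def psiF (k r : ℕ) : F2 →* (Function.End (ℕ × Bool))ᵐᵒᵖ :=
  FreeMonoid.lift (fun c => if c then op (del k r) else op (bet k r))

open MulOpposite in
lemma psiF_dF : psiF k r dF = op (del k r) := by
  rw [dF, psiF, FreeMonoid.lift_eval_of]; rfl

open MulOpposite in
lemma psiF_bF : psiF k r bF = op (bet k r) := by
  rw [bF, psiF, FreeMonoid.lift_eval_of]; rfl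

open MulOpposite in
lemma psiF_rel (hk : 1 ≤ k) (hr : 1 ≤ r) : presCon (Rset k r) ≤ Con.ker (psiF k r) := by
  apply Con.conGen_le.mpr
  rintro x y h
  rcases h with h | h | h
  · obtain ⟨h1, h2⟩ := Prod.mk.injEq .. ▸ h
    rw [Con.ker_rel, h1, h2, map_mul, psiF_dF, map_one, ← op_mul, del_del, op_one]
  · obtain ⟨h1, h2⟩ := Prod.mk.injEq .. ▸ h
    rw [Con.ker_rel, h1, h2, map_mul, psiF_bF, ← op_mul, bet_bet]
  · rw [Rset, Set.mem_singleton_iff] at h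
    obtain ⟨h1, h2⟩ := Prod.mk.injEq .. ▸ h
    rw [Con.ker_rel, h1, h2, map_pow, map_pow, map_mul, psiF_dF, psiF_bF, ← op_mul,
      ← gg, ← op_pow, ← op_pow, rel_gg hk hr]

def psi (hk : 1 ≤ k) (hr : 1 ≤ r) : M k r →* (Function.End (ℕ × Bool))ᵐᵒᵖ :=
  Con.lift _ (psiF k r) (psiF_rel hk hr)

lemma psi_pi (hk : 1 ≤ k) (hr : 1 ≤ r) (w : F2) :
    psi hk hr (pi k r w) = psiF k r w := Con.lift_mk' _ _

open MulOpposite in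
lemma psi_D (hk : 1 ≤ k) (hr : 1 ≤ r) : psi hk hr (D k r) = op (del k r) := by
  rw [D, psi_pi, psiF_dF]

open MulOpposite in
lemma psi_B (hk : 1 ≤ k) (hr : 1 ≤ r) : psi hk hr (B k r) = op (bet k r) := by
  rw [B, psi_pi, psiF_bF]

open MulOpposite in
lemma psi_C (hk : 1 ≤ k) (hr : 1 ≤ r) : psi hk hr (C k r) = op (gg k r) := by
  rw [C, map_mul, psi_D, psi_B, ← op_mul, gg]

/-! ### Injectivity of powers of C below k -/

lemma pow_k_le (hk : 1 ≤ k) (hr : 1 ≤ r) {a s : ℕ} (hs : 1 ≤ s)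
    (h : C k r ^ a = C k r ^ (a + s)) : k ≤ a := by
  by_contra hlt
  push_neg at hlt
  have h2 : ff k r ^ a = ff k r ^ (a + s) := by
    have := congrArg (phi hk hr) h
    rwa [map_pow, map_pow, phi_C] at this
  have h3 : ((rho k r)^[a] 0, false) = ((rho k r)^[a+s] 0, false) := by
    rw [← ffpow_false hk hr, ← ffpow_false hk hr, h2]
  have h4 : (rho k r)^[a] 0 = (rho k r)^[a+s] 0 := by
    exact congrArg Prod.fst h3
  rw [rho_tail a 0 (by omega), Nat.zero_add] at h4
  rcases Nat.lt_or_ge (a + s) (k + r) with hc | hc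
  · rw [rho_tail (a+s) 0 (by omega), Nat.zero_add] at h4
    omega
  · have h5 := rho_entry (k := k) hr (a + s) 0 (by omega) (by omega)
    rw [← h4] at h5
    exact absurd h5.1 (by omega)

/-! ### Evaluation of normal forms -/

section Evals
variable (hk : 1 ≤ k) (hr : 1 ≤ r)

lemma rho_zero (hk : 1 ≤ k) (hr : 1 ≤ r) : rho k r 0 = 1 := by
  unfold rho; split <;> omega

lemma rho_step {m : ℕ} (h : m < k + r - 1) : rho k r m = m + 1 := by
  unfold rho; split <;> omega

lemma del_00 : del k r (0, false) = (0, false) := by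
  unfold del; simp

lemma V1 {m : ℕ} (hm : m < k + r) : phi hk hr (C k r ^ m) (0, false) = (m, false) := by
  rw [map_pow, phi_C, ffpow_false hk hr, rho_tail m 0 (by omega), Nat.zero_add]

lemma V2 {m : ℕ} (hm : m < k + r) :
    phi hk hr (C k r ^ m * D k r) (0, false) = (m, false) := by
  rw [map_mul, map_pow, phi_C, phi_D]
  show (ff k r ^ m) (del k r (0, false)) = _
  rw [del_00, ffpow_false hk hr, rho_tail m 0 (by omega), Nat.zero_add]

lemma V3 {m : ℕ} (hm : m < k + r - 1) :
    phi hk hr (B k r * C k r ^ m) (0, false) = (m + 1, true) := by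
  rw [map_mul, map_pow, phi_C, phi_B]
  show bet k r ((ff k r ^ m) (0, false)) = _
  rw [ffpow_false hk hr, rho_tail m 0 (by omega), Nat.zero_add]
  show (if false then _ else (rho k r m, true)) = _
  rw [if_neg (by simp), rho_step hm]

lemma V4 {m : ℕ} (hm : m < k + r - 1) :
    phi hk hr (B k r * C k r ^ m * D k r) (0, false) = (m + 1, true) := by
  rw [map_mul, map_mul, map_pow, phi_C, phi_B, phi_D]
  show bet k r ((ff k r ^ m) (del k r (0, false))) = _
  rw [del_00, ffpow_false hk hr, rho_tail m 0 (by omega), Nat.zero_add]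
  show (if false then _ else (rho k r m, true)) = _
  rw [if_neg (by simp), rho_step hm]

open MulOpposite in
lemma W1 {m : ℕ} (hm1 : 1 ≤ m) (hm : m < k + r) :
    (psi hk hr (C k r ^ m)).unop (0, false) = (m, true) := by
  rw [map_pow, psi_C, ← op_pow, unop_op]
  obtain ⟨m', rfl⟩ : ∃ m', m = m' + 1 := ⟨m - 1, by omega⟩
  rw [end_pow_succ]
  have h0 : gg k r (0, false) = (1, true) := by
    rw [gg_false_out (by omega), rho_zero hk hr]
  rw [h0, ggpow_true_in hk hr _ _ (by omega) (by omega),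
    rho_tail m' 1 (by omega)]
  congr 1
  omega

open MulOpposite in
lemma W2 {m : ℕ} (hm : m < k + r) :
    (psi hk hr (C k r ^ m * D k r)).unop (0, false) = (m, false) := by
  rw [map_mul, map_pow, psi_C, psi_D, ← op_pow, ← op_mul, unop_op]
  rcases Nat.eq_zero_or_pos m with hm0 | hm0
  · subst hm0
    show del k r ((gg k r ^ 0) (0, false)) = _
    rw [pow_zero]
    show del k r ((0 : ℕ), false) = _
    rw [del_00]
  · obtain ⟨m', rfl⟩ : ∃ m', m = m' + 1 := ⟨m - 1, by omega⟩
    have h0 : gg k r (0, false) = (1, true) := by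
      rw [gg_false_out (by omega), rho_zero hk hr]
    show del k r ((gg k r ^ (m'+1)) (0, false)) = _
    rw [end_pow_succ, h0, ggpow_true_in hk hr _ _ (by omega) (by omega),
      rho_tail m' 1 (by omega)]
    show (if 1 ≤ 1 + m' ∧ 1 + m' < k + r then ((1+m' : ℕ), !true) else ((1+m' : ℕ), true)) = _
    rw [if_pos ⟨by omega, by omega⟩]
    simp only [Bool.not_true]
    congr 1
    omega

open MulOpposite in
lemma W3 {m : ℕ} (hm : m < k + r - 1) :
    (psi hk hr (B k r * C k r ^ m)).unop (0, false) = (m + 1, true) := by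
  rw [map_mul, map_pow, psi_C, psi_B, ← op_pow, ← op_mul, unop_op]
  show (gg k r ^ m) (bet k r (0, false)) = _
  have h0 : bet k r (0, false) = (1, true) := by
    show (if false then _ else (rho k r 0, true)) = _
    rw [if_neg (by simp), rho_zero hk hr]
  rw [h0, ggpow_true_in hk hr _ _ (by omega) (by omega), rho_tail m 1 (by omega)]
  congr 1
  omega

open MulOpposite in
lemma W4 {m : ℕ} (hm : m < k + r - 1) :
    (psi hk hr (B k r * C k r ^ m * D k r)).unop (0, false) = (m + 1, false) := by
  rw [map_mul, map_mul, map_pow, psi_C, psi_B, psi_D, ← op_pow, ← op_mul, ← op_mul, unop_op]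
  show del k r ((gg k r ^ m) (bet k r (0, false))) = _
  have h0 : bet k r (0, false) = (1, true) := by
    show (if false then _ else (rho k r 0, true)) = _
    rw [if_neg (by simp), rho_zero hk hr]
  rw [h0, ggpow_true_in hk hr _ _ (by omega) (by omega), rho_tail m 1 (by omega)]
  show (if 1 ≤ 1 + m ∧ 1 + m < k + r then ((1+m : ℕ), !true) else ((1+m : ℕ), true)) = _
  rw [if_pos ⟨by omega, by omega⟩]
  simp only [Bool.not_true]
  congr 1
  omega

lemma X1 : phi hk hr (C k r ^ 0) (1, true) = (1, true) := by
  rw [pow_zero, map_one]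
  rfl

lemma X2 : phi hk hr (C k r ^ 0 * D k r) (1, true) = (1, false) := by
  rw [pow_zero, one_mul, phi_D]
  show (if 1 ≤ 1 ∧ 1 < k + r then ((1:ℕ), !true) else ((1:ℕ), true)) = _
  rw [if_pos ⟨le_rfl, by omega⟩]
  simp

end Evals
/-! ### Spanning list and cardinality -/

lemma L2' (hk : 1 ≤ k) {a : ℕ} (ha : k - 1 ≤ a) (t : ℕ) :
    B k r * C k r ^ (a + t * r) = B k r * C k r ^ a := by
  rw [← hDCm, ← hDCm, show a + t * r + 1 = (a + 1) + t * r from by ring,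
    L1' (by omega) t]

lemma red1 (hk : 1 ≤ k) (hr : 1 ≤ r) (m : ℕ) :
    ∃ m', m' < k + r ∧ C k r ^ m' = C k r ^ m := by
  rcases Nat.lt_or_ge m (k + r) with h | h
  · exact ⟨m, h, rfl⟩
  · have hmod : (m - k) % r < r := Nat.mod_lt _ (by omega)
    refine ⟨k + (m - k) % r, by omega, ?_⟩
    have key := L1' (k := k) (r := r) (a := k + (m - k) % r) (by omega) ((m - k) / r)
    rw [key.symm]
    congr 1
    have h1 := Nat.div_add_mod (m - k) r
    have h2 : (m - k) / r * r = r * ((m - k) / r) := Nat.mul_comm _ _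
    omega

lemma red2 (hk : 1 ≤ k) (hr : 1 ≤ r) (m : ℕ) :
    ∃ m', m' < k + r - 1 ∧ B k r * C k r ^ m' = B k r * C k r ^ m := by
  rcases Nat.lt_or_ge m (k + r - 1) with h | h
  · exact ⟨m, h, rfl⟩
  · have hmod : (m - (k - 1)) % r < r := Nat.mod_lt _ (by omega)
    refine ⟨(k - 1) + (m - (k - 1)) % r, by omega, ?_⟩
    have key := L2' (k := k) (r := r) hk (a := (k - 1) + (m - (k - 1)) % r) (by omega)
      ((m - (k - 1)) / r)
    rw [key.symm]
    congr 2
    have h1 := Nat.div_add_mod (m - (k - 1)) r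
    have h2 : (m - (k - 1)) / r * r = r * ((m - (k - 1)) / r) := Nat.mul_comm _ _
    omega

def nfList (k r : ℕ) : List (M k r) :=
  ((List.range (k+r)).map fun m => C k r ^ m) ++
  ((List.range (k+r)).map fun m => C k r ^ m * D k r) ++
  ((List.range (k+r-1)).map fun m => B k r * C k r ^ m) ++
  ((List.range (k+r-1)).map fun m => B k r * C k r ^ m * D k r)

lemma mem_nfList (hk : 1 ≤ k) (hr : 1 ≤ r) (x : M k r) : x ∈ nfList k r := by
  unfold nfList
  simp only [List.mem_append, List.mem_map, List.mem_range]
  obtain ⟨m, h | h | h | h⟩ := shape x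
  · obtain ⟨m', hm', he⟩ := red1 hk hr m
    exact Or.inl (Or.inl (Or.inl ⟨m', hm', by rw [he, h]⟩))
  · obtain ⟨m', hm', he⟩ := red1 hk hr m
    exact Or.inl (Or.inl (Or.inr ⟨m', hm', by rw [he, h]⟩))
  · obtain ⟨m', hm', he⟩ := red2 hk hr m
    exact Or.inl (Or.inr ⟨m', hm', by rw [he, h]⟩)
  · obtain ⟨m', hm', he⟩ := red2 hk hr m
    exact Or.inr ⟨m', hm', by rw [he, h]⟩

section NodupProof

lemma d11 (hk : 1 ≤ k) (hr : 1 ≤ r) {m m' : ℕ} (hm : m < k + r) (hm' : m' < k + r)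
    (h : C k r ^ m = C k r ^ m') : m = m' := by
  have := congrArg (fun z => phi hk hr z (0, false)) h
  rw [V1 hk hr hm, V1 hk hr hm'] at this
  exact congrArg Prod.fst this

lemma d22 (hk : 1 ≤ k) (hr : 1 ≤ r) {m m' : ℕ} (hm : m < k + r) (hm' : m' < k + r)
    (h : C k r ^ m * D k r = C k r ^ m' * D k r) : m = m' := by
  have := congrArg (fun z => phi hk hr z (0, false)) h
  rw [V2 hk hr hm, V2 hk hr hm'] at this
  exact congrArg Prod.fst this

lemma d33 (hk : 1 ≤ k) (hr : 1 ≤ r) {m m' : ℕ} (hm : m < k + r - 1) (hm' : m' < k + r - 1)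
    (h : B k r * C k r ^ m = B k r * C k r ^ m') : m = m' := by
  have := congrArg (fun z => phi hk hr z (0, false)) h
  rw [V3 hk hr hm, V3 hk hr hm'] at this
  have := congrArg Prod.fst this
  omega

lemma d44 (hk : 1 ≤ k) (hr : 1 ≤ r) {m m' : ℕ} (hm : m < k + r - 1) (hm' : m' < k + r - 1)
    (h : B k r * C k r ^ m * D k r = B k r * C k r ^ m' * D k r) : m = m' := by
  have := congrArg (fun z => phi hk hr z (0, false)) h
  rw [V4 hk hr hm, V4 hk hr hm'] at this
  have := congrArg Prod.fst this
  omega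

lemma d12 (hk : 1 ≤ k) (hr : 1 ≤ r) {m m' : ℕ} (hm : m < k + r) (hm' : m' < k + r)
    (h : C k r ^ m = C k r ^ m' * D k r) : False := by
  have h1 := congrArg (fun z => phi hk hr z (0, false)) h
  rw [V1 hk hr hm, V2 hk hr hm'] at h1
  have hmm : m = m' := congrArg Prod.fst h1
  subst hmm
  rcases Nat.eq_zero_or_pos m with h0 | h0
  · subst h0
    have h2 := congrArg (fun z => phi hk hr z (1, true)) h
    rw [X1 hk hr, X2 hk hr] at h2
    simpa using congrArg Prod.snd h2
  · have h2 := congrArg (fun z => (psi hk hr z).unop (0, false)) h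
    rw [W1 hk hr h0 hm, W2 hk hr hm] at h2
    simpa using congrArg Prod.snd h2

lemma d34 (hk : 1 ≤ k) (hr : 1 ≤ r) {m m' : ℕ} (hm : m < k + r - 1) (hm' : m' < k + r - 1)
    (h : B k r * C k r ^ m = B k r * C k r ^ m' * D k r) : False := by
  have h2 := congrArg (fun z => (psi hk hr z).unop (0, false)) h
  rw [W3 hk hr hm, W4 hk hr hm'] at h2
  simpa using congrArg Prod.snd h2

lemma dlohi (hk : 1 ≤ k) (hr : 1 ≤ r) {m m' : ℕ} (hm : m < k + r)
    (h : C k r ^ m = B k r * C k r ^ m' ∨ C k r ^ m = B k r * C k r ^ m' * D k r ∨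
      C k r ^ m * D k r = B k r * C k r ^ m' ∨ C k r ^ m * D k r = B k r * C k r ^ m' * D k r)
    (hm' : m' < k + r - 1) : False := by
  rcases h with h | h | h | h <;> {
    have h1 := congrArg (fun z => phi hk hr z (0, false)) h
    first
    | (rw [V1 hk hr hm, V3 hk hr hm'] at h1; simpa using congrArg Prod.snd h1)
    | (rw [V1 hk hr hm, V4 hk hr hm'] at h1; simpa using congrArg Prod.snd h1)
    | (rw [V2 hk hr hm, V3 hk hr hm'] at h1; simpa using congrArg Prod.snd h1)
    | (rw [V2 hk hr hm, V4 hk hr hm'] at h1; simpa using congrArg Prod.snd h1)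
  }

lemma nodup_nfList (hk : 1 ≤ k) (hr : 1 ≤ r) : (nfList k r).Nodup := by
  unfold nfList
  rw [List.append_assoc, List.append_assoc]
  rw [List.nodup_append', List.nodup_append', List.nodup_append']
  refine ⟨?_, ⟨?_, ⟨?_, ?_, ?_⟩, ?_⟩, ?_⟩
  · exact List.nodup_range.map_on
      (fun x hx y hy hxy => d11 hk hr (List.mem_range.mp hx) (List.mem_range.mp hy) hxy)
  · exact List.nodup_range.map_on
      (fun x hx y hy hxy => d22 hk hr (List.mem_range.mp hx) (List.mem_range.mp hy) hxy)
  · exact List.nodup_range.map_on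
      (fun x hx y hy hxy => d33 hk hr (List.mem_range.mp hx) (List.mem_range.mp hy) hxy)
  · exact List.nodup_range.map_on
      (fun x hx y hy hxy => d44 hk hr (List.mem_range.mp hx) (List.mem_range.mp hy) hxy)
  · -- l3 disjoint l4
    intro a ha3 ha4
    simp only [List.mem_map, List.mem_range] at ha3 ha4
    obtain ⟨m, hm, rfl⟩ := ha3
    obtain ⟨m', hm', he⟩ := ha4
    exact d34 hk hr hm hm' he.symm
  · -- l2 disjoint (l3 ++ l4)
    intro a ha2 ha34
    simp only [List.mem_append, List.mem_map, List.mem_range] at ha2 ha34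
    obtain ⟨m, hm, rfl⟩ := ha2
    rcases ha34 with ⟨m', hm', he⟩ | ⟨m', hm', he⟩
    · exact dlohi hk hr hm (Or.inr (Or.inr (Or.inl he.symm))) hm'
    · exact dlohi hk hr hm (Or.inr (Or.inr (Or.inr he.symm))) hm'
  · -- l1 disjoint (l2 ++ l3 ++ l4)
    intro a ha1 ha234
    simp only [List.mem_append, List.mem_map, List.mem_range] at ha1 ha234
    obtain ⟨m, hm, rfl⟩ := ha1
    rcases ha234 with ⟨m', hm', he⟩ | ⟨m', hm', he⟩ | ⟨m', hm', he⟩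
    · exact d12 hk hr hm hm' he.symm
    · exact dlohi hk hr hm (Or.inl he.symm) hm'
    · exact dlohi hk hr hm (Or.inr (Or.inl he.symm)) hm'

end NodupProof

lemma card_M (hk : 1 ≤ k) (hr : 1 ≤ r) : Nat.card (M k r) = 4 * (k + r) - 2 := by
  classical
  have e := List.Nodup.getEquivOfForallMemList (nfList k r) (nodup_nfList hk hr)
    (mem_nfList hk hr)
  rw [Nat.card_eq_of_equiv_fin e.symm]
  unfold nfList
  simp only [List.length_append, List.length_map, List.length_range]
  omega

end Model

/-! ### The main theorem -/

lemma main_forward {k r k' r' : ℕ} (hk : 1 ≤ k) (hr : 1 ≤ r) (hk' : 1 ≤ k') (hr' : 1 ≤ r')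
    (e : M k r ≃* M k' r') : k = k' ∧ r = r' := by
  have id1 : ∀ y : M k' r', y ^ k = y ^ (k + 2*r) := by
    intro y
    have h := idM hk (e.symm y)
    have h2 := congrArg e h
    rw [map_pow, map_pow, MulEquiv.apply_symm_apply] at h2
    exact h2
  have id2 : ∀ y : M k r, y ^ k' = y ^ (k' + 2*r') := by
    intro y
    have h := idM hk' (e y)
    have h2 := congrArg e.symm h
    rw [map_pow, map_pow, MulEquiv.symm_apply_apply] at h2
    exact h2
  have hle1 : k' ≤ k := pow_k_le hk' hr' (by omega) (id1 (C k' r'))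
  have hle2 : k ≤ k' := pow_k_le hk hr (by omega) (id2 (C k r))
  have hcard : Nat.card (M k r) = Nat.card (M k' r') := Nat.card_congr e.toEquiv
  rw [card_M hk hr, card_M hk' hr'] at hcard
  exact ⟨by omega, by omega⟩

end Stmt18

/-- `M00(k, r) ≅ M00(k', r')` if and only if `k = k'` and `r = r'`. -/
theorem stmt_18 (k r k' r' : ℕ) (hk : 1 ≤ k) (hr : 1 ≤ r) (hk' : 1 ≤ k') (hr' : 1 ≤ r') :
    Nonempty (PresMon {((dF * bF) ^ k, (dF * bF) ^ (k + r))} ≃*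
        PresMon {((dF * bF) ^ k', (dF * bF) ^ (k' + r'))}) ↔
      (k = k' ∧ r = r') := by
  constructor
  · rintro ⟨e⟩
    exact Stmt18.main_forward hk hr hk' hr' e
  · rintro ⟨rfl, rfl⟩
    exact ⟨MulEquiv.refl _⟩
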